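/- Let G be a finite simple graph with Ore-degree θ(G) ≤ 7 such that G admits no strong edge-coloring with 13 colors but every proper subgraph of G admits a strong edge-coloring with 13 colors. Then every vertex of degree 4 in G is adjacent to at most two vertices of degree 2. -/

import Mathlib

/-- Two edges `e` and `f` of a graph `G` *see* each other if they are contained in a
common path or cycle of length at most three, i.e. they share an endpoint or some
endpoint of `e` is adjacent to some endpoint of `f`. -/
def SimpleGraph.Sees {V : Type*} (G : SimpleGraph V) (e f : Sym2 V) : Prop :=
  ∃ u ∈ e, ∃ v ∈ f, u = v ∨ G.Adj u v

/-- `c` is a strong edge-coloring of `G`: edges that see each other get distinct colors. -/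
def SimpleGraph.IsStrongEdgeColoring {V α : Type*} (G : SimpleGraph V) (c : Sym2 V → α) : Prop :=
  ∀ e ∈ G.edgeSet, ∀ f ∈ G.edgeSet, e ≠ f → G.Sees e f → c e ≠ c f

/-- `G` admits a strong edge-coloring with `n` colors. -/
def SimpleGraph.HasStrongColoring {V : Type*} (G : SimpleGraph V) (n : ℕ) : Prop :=
  ∃ c : Sym2 V → Fin n, G.IsStrongEdgeColoring c

theorem statement2 {V : Type*} [Fintype V] [DecidableEq V]
    (G : SimpleGraph V) [DecidableRel G.Adj]
    (hore : ∀ u v : V, G.Adj u v → G.degree u + G.degree v ≤ 7)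
    (hG : ¬ G.HasStrongColoring 13)
    (hmin : ∀ H : G.Subgraph, H ≠ ⊤ → H.coe.HasStrongColoring 13) :
    ∀ v : V, G.degree v = 4 →
      ((G.neighborFinset v).filter (fun u => G.degree u = 2)).card ≤ 2 := by
  have hmemN : ∀ a b : V, a ∈ G.neighborFinset b ↔ G.Adj b a := by
    intro a b
    rw [SimpleGraph.mem_neighborFinset]
  have hmemE : ∀ a b : V, s(a, b) ∈ G.edgeSet ↔ G.Adj a b := by
    intro a b
    rw [SimpleGraph.mem_edgeSet]
  intro v hv4
  by_contra hcge
  push_neg at hcge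
  obtain ⟨t, hts, ht3⟩ := Finset.exists_subset_card_eq hcge
  obtain ⟨u1, u2, u3, h12, h13, h23, rfl⟩ := Finset.card_eq_three.mp ht3
  have hmem : ∀ x ∈ ({u1, u2, u3} : Finset V), G.Adj v x ∧ G.degree x = 2 := by
    intro x hx
    have := hts hx
    rw [Finset.mem_filter, SimpleGraph.mem_neighborFinset] at this
    exact this
  obtain ⟨ha1, hd1⟩ := hmem u1 (by simp)
  obtain ⟨ha2, hd2⟩ := hmem u2 (by simp)
  obtain ⟨ha3, hd3⟩ := hmem u3 (by simp)
  have hsub123 : ({u1, u2, u3} : Finset V) ⊆ G.neighborFinset v := by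
    intro x hx
    rw [SimpleGraph.mem_neighborFinset]
    exact (hmem x hx).1
  have hdv : (G.neighborFinset v).card = 4 := hv4
  have hpos : 0 < ((G.neighborFinset v) \ {u1, u2, u3}).card := by
    rw [Finset.card_sdiff_of_subset hsub123, ht3, hdv]
    norm_num
  obtain ⟨u4, hu4⟩ := Finset.card_pos.mp hpos
  rw [Finset.mem_sdiff] at hu4
  have ha4 : G.Adj v u4 := (hmemN u4 v).mp hu4.1
  have h41 : u4 ≠ u1 := fun h => hu4.2 (by simp [h])
  have h42 : u4 ≠ u2 := fun h => hu4.2 (by simp [h])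
  have h43 : u4 ≠ u3 := fun h => hu4.2 (by simp [h])
  have hNv : G.neighborFinset v = {u1, u2, u3, u4} := by
    refine (Finset.eq_of_subset_of_card_le ?_ ?_).symm
    · intro x hx
      simp only [Finset.mem_insert, Finset.mem_singleton] at hx
      rw [hmemN]
      rcases hx with h | h | h | h <;> rw [h]
      exacts [ha1, ha2, ha3, ha4]
    · rw [hdv]
      have hcard4 : ({u1, u2, u3, u4} : Finset V).card = 4 := by
        rw [Finset.card_insert_of_notMem (by simp [h12, h13, Ne.symm h41]),
          Finset.card_insert_of_notMem (by simp [h23, Ne.symm h42]),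
          Finset.card_insert_of_notMem (by simp [Ne.symm h43]),
          Finset.card_singleton]
      omega
  -- the other neighbor w of u1
  have hvN1 : v ∈ G.neighborFinset u1 := (hmemN v u1).mpr ha1.symm
  have hd1c : (G.neighborFinset u1).card = 2 := hd1
  have hpos1 : 0 < ((G.neighborFinset u1).erase v).card := by
    rw [Finset.card_erase_of_mem hvN1, hd1c]
    norm_num
  obtain ⟨w, hw⟩ := Finset.card_pos.mp hpos1
  have hwv : w ≠ v := (Finset.mem_erase.mp hw).1
  have haw : G.Adj u1 w := (hmemN w u1).mp (Finset.mem_erase.mp hw).2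
  have hN1 : G.neighborFinset u1 = {v, w} := by
    refine (Finset.eq_of_subset_of_card_le ?_ ?_).symm
    · intro x hx
      simp only [Finset.mem_insert, Finset.mem_singleton] at hx
      rcases hx with h | h <;> rw [h]
      · exact hvN1
      · exact (Finset.mem_erase.mp hw).2
    · rw [hd1c, Finset.card_insert_of_notMem (by simp [Ne.symm hwv]), Finset.card_singleton]
  have hvu1 : v ≠ u1 := G.ne_of_adj ha1
  have hu1wne : u1 ≠ w := G.ne_of_adj haw
  set e0 : Sym2 V := s(v, u1) with he0
  set e1 : Sym2 V := s(u1, w) with he1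
  have he01 : e0 ≠ e1 := by
    rw [he0, he1]
    simp [Sym2.eq_iff, hvu1, Ne.symm hwv]
  have edge_at_u1 : ∀ f : Sym2 V, f ∈ G.edgeSet → u1 ∈ f → f = e0 ∨ f = e1 := by
    intro f hf h1
    obtain ⟨y, rfl⟩ := Sym2.mem_iff_exists.mp h1
    have hy : y ∈ G.neighborFinset u1 := (hmemN y u1).mpr ((hmemE u1 y).mp hf)
    rw [hN1] at hy
    simp only [Finset.mem_insert, Finset.mem_singleton] at hy
    rcases hy with h | h
    · left; rw [he0, h]; exact Sym2.eq_swap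
    · right; rw [he1, h]
  have hno1 : ∀ a b : V, G.Adj a b → s(a, b) ≠ e0 → s(a, b) ≠ e1 → u1 ∉ s(a, b) := by
    intro a b hab h1 h2 hm
    rcases edge_at_u1 _ ((hmemE a b).mpr hab) hm with h | h
    · exact h1 h
    · exact h2 h
  -- the subgraph obtained by deleting e0 and e1
  let H : G.Subgraph :=
    { verts := Set.univ
      Adj := fun a b => G.Adj a b ∧ s(a, b) ≠ e0 ∧ s(a, b) ≠ e1
      adj_sub := fun h => h.1
      edge_vert := fun _ => Set.mem_univ _
      symm := by
        constructor
        intro a b h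
        obtain ⟨h1, h2, h3⟩ := h
        exact ⟨h1.symm, by rwa [Sym2.eq_swap], by rwa [Sym2.eq_swap]⟩ }
  have hHtop : H ≠ ⊤ := by
    intro h
    have h2 : H.Adj v u1 := by
      rw [h]
      exact SimpleGraph.Subgraph.top_adj.mpr ha1
    exact h2.2.1 he0.symm
  obtain ⟨c, hc⟩ := hmin H hHtop
  let ι : V → ↥H.verts := fun x => ⟨x, Set.mem_univ x⟩
  have hι : Function.Injective ι := fun a b h => congrArg Subtype.val h
  let c' : Sym2 V → Fin 13 := fun e => c (Sym2.map ι e)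
  have htrans : ∀ a b a' b' : V, G.Adj a b → G.Adj a' b' →
      s(a, b) ≠ e0 → s(a, b) ≠ e1 → s(a', b') ≠ e0 → s(a', b') ≠ e1 →
      s(a, b) ≠ s(a', b') → G.Sees s(a, b) s(a', b') → c' s(a, b) ≠ c' s(a', b') := by
    intro a b a' b' hab hab' h1 h2 h3 h4 hne hsee
    obtain ⟨u, hu, x, hx, hux⟩ := hsee
    have hmain : c (Sym2.map ι s(a, b)) ≠ c (Sym2.map ι s(a', b')) := by
      refine hc _ ?_ _ ?_ ?_ ?_
      · rw [Sym2.map_pair_eq, SimpleGraph.mem_edgeSet]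
        exact ⟨hab, h1, h2⟩
      · rw [Sym2.map_pair_eq, SimpleGraph.mem_edgeSet]
        exact ⟨hab', h3, h4⟩
      · intro h
        exact hne (Sym2.map.injective hι h)
      · refine ⟨ι u, ?_, ι x, ?_, ?_⟩
        · rw [Sym2.map_pair_eq, Sym2.mem_iff]
          rcases Sym2.mem_iff.mp hu with h | h
          · exact Or.inl (congrArg ι h)
          · exact Or.inr (congrArg ι h)
        · rw [Sym2.map_pair_eq, Sym2.mem_iff]
          rcases Sym2.mem_iff.mp hx with h | h
          · exact Or.inl (congrArg ι h)
          · exact Or.inr (congrArg ι h)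
        · rcases hux with h | hadj
          · exact Or.inl (congrArg ι h)
          · refine Or.inr ?_
            have hne0' : s(u, x) ≠ e0 := by
              intro h
              have hm : u1 ∈ s(u, x) := by rw [h, he0]; simp
              rcases Sym2.mem_iff.mp hm with h' | h'
              · exact hno1 a b hab h1 h2 (by rw [h']; exact hu)
              · exact hno1 a' b' hab' h3 h4 (by rw [h']; exact hx)
            have hne1' : s(u, x) ≠ e1 := by
              intro h
              have hm : u1 ∈ s(u, x) := by rw [h, he1]; simp
              rcases Sym2.mem_iff.mp hm with h' | h'
              · exact hno1 a b hab h1 h2 (by rw [h']; exact hu)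
              · exact hno1 a' b' hab' h3 h4 (by rw [h']; exact hx)
            exact ⟨hadj, hne0', hne1'⟩
    exact hmain
  have hinc : ∀ (y : V) (f : Sym2 V), f ∈ G.incidenceFinset y ↔ f ∈ G.edgeSet ∧ y ∈ f := by
    intro y f
    rw [SimpleGraph.mem_incidenceFinset]
    exact Iff.rfl
  -- incidence memberships
  have he0iv : e0 ∈ G.incidenceFinset v :=
    (hinc v e0).mpr ⟨by rw [he0]; exact (hmemE v u1).mpr ha1, by rw [he0]; simp⟩
  have he0i1 : e0 ∈ G.incidenceFinset u1 :=
    (hinc u1 e0).mpr ⟨by rw [he0]; exact (hmemE v u1).mpr ha1, by rw [he0]; simp⟩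
  have he1i1 : e1 ∈ G.incidenceFinset u1 :=
    (hinc u1 e1).mpr ⟨by rw [he1]; exact (hmemE u1 w).mpr haw, by rw [he1]; simp⟩
  have he1iw : e1 ∈ G.incidenceFinset w :=
    (hinc w e1).mpr ⟨by rw [he1]; exact (hmemE u1 w).mpr haw, by rw [he1]; simp⟩
  have hsv2 : s(v, u2) ∈ G.incidenceFinset u2 :=
    (hinc u2 _).mpr ⟨(hmemE v u2).mpr ha2, by simp⟩
  have hsv3 : s(v, u3) ∈ G.incidenceFinset u3 :=
    (hinc u3 _).mpr ⟨(hmemE v u3).mpr ha3, by simp⟩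
  have hsv4 : s(v, u4) ∈ G.incidenceFinset u4 :=
    (hinc u4 _).mpr ⟨(hmemE v u4).mpr ha4, by simp⟩
  set A : Finset (Sym2 V) := (G.incidenceFinset v).erase e0 with hA
  set B : Finset (Sym2 V) := (G.incidenceFinset u1).erase e0 with hB
  set C2 : Finset (Sym2 V) := (G.incidenceFinset u2).erase s(v, u2) with hC2
  set C3 : Finset (Sym2 V) := (G.incidenceFinset u3).erase s(v, u3) with hC3
  set C4 : Finset (Sym2 V) := (G.incidenceFinset u4).erase s(v, u4) with hC4
  set Fw : Finset (Sym2 V) := (G.incidenceFinset w).erase e1 with hFw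
  set Bi : Finset (Sym2 V) :=
    ((G.neighborFinset w).erase u1).biUnion (fun x => (G.incidenceFinset x).erase s(w, x)) with hBi
  set T0 : Finset (Sym2 V) := A ∪ B ∪ C2 ∪ C3 ∪ C4 ∪ Fw with hT0
  set T1 : Finset (Sym2 V) := A ∪ Fw ∪ Bi with hT1
  have hAcard : A.card = 3 := by
    rw [hA, Finset.card_erase_of_mem he0iv, SimpleGraph.card_incidenceFinset_eq_degree, hv4]
  have hBcard : B.card = 1 := by
    rw [hB, Finset.card_erase_of_mem he0i1, SimpleGraph.card_incidenceFinset_eq_degree, hd1]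
  have hC2card : C2.card = 1 := by
    rw [hC2, Finset.card_erase_of_mem hsv2, SimpleGraph.card_incidenceFinset_eq_degree, hd2]
  have hC3card : C3.card = 1 := by
    rw [hC3, Finset.card_erase_of_mem hsv3, SimpleGraph.card_incidenceFinset_eq_degree, hd3]
  have hd4 : G.degree u4 ≤ 3 := by
    have := hore v u4 ha4
    omega
  have hC4card : C4.card ≤ 2 := by
    rw [hC4, Finset.card_erase_of_mem hsv4, SimpleGraph.card_incidenceFinset_eq_degree]
    omega
  have hwdeg : G.degree w ≤ 5 := by
    have := hore u1 w haw
    omega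
  have hFwcard : Fw.card = G.degree w - 1 := by
    rw [hFw, Finset.card_erase_of_mem he1iw, SimpleGraph.card_incidenceFinset_eq_degree]
  have hT0card : T0.card ≤ 12 := by
    have t1 := Finset.card_union_le (A ∪ B ∪ C2 ∪ C3 ∪ C4) Fw
    have t2 := Finset.card_union_le (A ∪ B ∪ C2 ∪ C3) C4
    have t3 := Finset.card_union_le (A ∪ B ∪ C2) C3
    have t4 := Finset.card_union_le (A ∪ B) C2
    have t5 := Finset.card_union_le A B
    rw [hT0]
    omega
  have hu1Nw : u1 ∈ G.neighborFinset w := (hmemN u1 w).mpr haw.symm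
  have hNwcard : ((G.neighborFinset w).erase u1).card = G.degree w - 1 := by
    rw [Finset.card_erase_of_mem hu1Nw]
    rfl
  have hBicard : Bi.card ≤ (G.degree w - 1) * (6 - G.degree w) := by
    rw [hBi]
    refine le_trans Finset.card_biUnion_le ?_
    refine le_trans (Finset.sum_le_card_nsmul _ _ (6 - G.degree w) ?_) ?_
    · intro x hx
      rw [Finset.mem_erase, hmemN] at hx
      have hadj : G.Adj w x := hx.2
      have h7 := hore w x hadj
      have hm : s(w, x) ∈ G.incidenceFinset x :=
        (hinc x _).mpr ⟨(hmemE w x).mpr hadj, by simp⟩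
      rw [Finset.card_erase_of_mem hm, SimpleGraph.card_incidenceFinset_eq_degree]
      omega
    · rw [smul_eq_mul, hNwcard]
  have hq : ∀ d : ℕ, d ≤ 5 → (d - 1) + (d - 1) * (6 - d) ≤ 9 := by
    intro d hd
    interval_cases d <;> norm_num
  have hT1card : T1.card ≤ 12 := by
    have t1 := Finset.card_union_le (A ∪ Fw) Bi
    have t2 := Finset.card_union_le A Fw
    have hq' := hq (G.degree w) hwdeg
    rw [hT1]
    generalize hP : (G.degree w - 1) * (6 - G.degree w) = P at hBicard hq'
    omega
  -- membership helpers
  have hT0A : ∀ f, f ∈ A → f ∈ T0 := fun f h =>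
    Finset.mem_union_left _ (Finset.mem_union_left _ (Finset.mem_union_left _
      (Finset.mem_union_left _ (Finset.mem_union_left _ h))))
  have hT0B : ∀ f, f ∈ B → f ∈ T0 := fun f h =>
    Finset.mem_union_left _ (Finset.mem_union_left _ (Finset.mem_union_left _
      (Finset.mem_union_left _ (Finset.mem_union_right _ h))))
  have hT0C2 : ∀ f, f ∈ C2 → f ∈ T0 := fun f h =>
    Finset.mem_union_left _ (Finset.mem_union_left _ (Finset.mem_union_left _
      (Finset.mem_union_right _ h)))
  have hT0C3 : ∀ f, f ∈ C3 → f ∈ T0 := fun f h =>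
    Finset.mem_union_left _ (Finset.mem_union_left _ (Finset.mem_union_right _ h))
  have hT0C4 : ∀ f, f ∈ C4 → f ∈ T0 := fun f h =>
    Finset.mem_union_left _ (Finset.mem_union_right _ h)
  have hT0Fw : ∀ f, f ∈ Fw → f ∈ T0 := fun f h => Finset.mem_union_right _ h
  have hT1A : ∀ f, f ∈ A → f ∈ T1 := fun f h =>
    Finset.mem_union_left _ (Finset.mem_union_left _ h)
  have hT1F : ∀ f, f ∈ Fw → f ∈ T1 := fun f h =>
    Finset.mem_union_left _ (Finset.mem_union_right _ h)
  have hT1Bi : ∀ f, f ∈ Bi → f ∈ T1 := fun f h => Finset.mem_union_right _ h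
  -- cover lemmas
  have hcov0 : ∀ f, f ∈ G.edgeSet → f ≠ e0 → G.Sees e0 f → f ∈ T0 := by
    intro f hf hfe0 hsee
    obtain ⟨u, hu, x, hx, hux⟩ := hsee
    rw [he0] at hu
    have hAmem : v ∈ f → f ∈ T0 := fun hvf =>
      hT0A f (Finset.mem_erase.mpr ⟨hfe0, (hinc v f).mpr ⟨hf, hvf⟩⟩)
    have hBmem : f = e1 → f ∈ T0 := by
      intro h
      rw [h]
      exact hT0B _ (Finset.mem_erase.mpr ⟨he01.symm, he1i1⟩)
    have hu1f : u1 ∈ f → f ∈ T0 := by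
      intro h
      rcases edge_at_u1 f hf h with h' | h'
      · exact absurd h' hfe0
      · exact hBmem h'
    rcases Sym2.mem_iff.mp hu with h | h <;> rw [h] at hux
    · rcases hux with h' | hadj
      · exact hAmem (by rw [h']; exact hx)
      · have hxN : x ∈ ({u1, u2, u3, u4} : Finset V) := by
          rw [← hNv, hmemN]
          exact hadj
        simp only [Finset.mem_insert, Finset.mem_singleton] at hxN
        rcases hxN with h' | h' | h' | h' <;> rw [h'] at hx
        · exact hu1f hx
        · by_cases hfv : f = s(v, u2)
          · exact hAmem (by rw [hfv]; simp)
          · exact hT0C2 f (Finset.mem_erase.mpr ⟨hfv, (hinc u2 f).mpr ⟨hf, hx⟩⟩)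
        · by_cases hfv : f = s(v, u3)
          · exact hAmem (by rw [hfv]; simp)
          · exact hT0C3 f (Finset.mem_erase.mpr ⟨hfv, (hinc u3 f).mpr ⟨hf, hx⟩⟩)
        · by_cases hfv : f = s(v, u4)
          · exact hAmem (by rw [hfv]; simp)
          · exact hT0C4 f (Finset.mem_erase.mpr ⟨hfv, (hinc u4 f).mpr ⟨hf, hx⟩⟩)
    · rcases hux with h' | hadj
      · exact hu1f (by rw [h']; exact hx)
      · have hxN : x ∈ ({v, w} : Finset V) := by
          rw [← hN1, hmemN]
          exact hadj
        simp only [Finset.mem_insert, Finset.mem_singleton] at hxN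
        rcases hxN with h' | h' <;> rw [h'] at hx
        · exact hAmem hx
        · by_cases hfe1 : f = e1
          · exact hBmem hfe1
          · exact hT0Fw f (Finset.mem_erase.mpr ⟨hfe1, (hinc w f).mpr ⟨hf, hx⟩⟩)
  have hcov1 : ∀ f, f ∈ G.edgeSet → f ≠ e0 → f ≠ e1 → G.Sees e1 f → f ∈ T1 := by
    intro f hf h0 h1 hsee
    obtain ⟨u, hu, x, hx, hux⟩ := hsee
    rw [he1] at hu
    have hAmem : v ∈ f → f ∈ T1 := fun hvf =>
      hT1A f (Finset.mem_erase.mpr ⟨h0, (hinc v f).mpr ⟨hf, hvf⟩⟩)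
    have hFmem : w ∈ f → f ∈ T1 := fun hwf =>
      hT1F f (Finset.mem_erase.mpr ⟨h1, (hinc w f).mpr ⟨hf, hwf⟩⟩)
    have hu1f : u1 ∈ f → False := by
      intro h
      rcases edge_at_u1 f hf h with h' | h'
      · exact h0 h'
      · exact h1 h'
    rcases Sym2.mem_iff.mp hu with h | h <;> rw [h] at hux
    · rcases hux with h' | hadj
      · exact absurd (by rw [h']; exact hx) hu1f
      · have hxN : x ∈ ({v, w} : Finset V) := by
          rw [← hN1, hmemN]
          exact hadj
        simp only [Finset.mem_insert, Finset.mem_singleton] at hxN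
        rcases hxN with h' | h' <;> rw [h'] at hx
        · exact hAmem hx
        · exact hFmem hx
    · rcases hux with h' | hadj
      · exact hFmem (by rw [h']; exact hx)
      · by_cases hxu1 : x = u1
        · exact absurd (by rw [← hxu1]; exact hx) hu1f
        · by_cases hfs : f = s(w, x)
          · exact hFmem (by rw [hfs]; simp)
          · refine hT1Bi f (Finset.mem_biUnion.mpr ⟨x, ?_,
              Finset.mem_erase.mpr ⟨hfs, (hinc x f).mpr ⟨hf, hx⟩⟩⟩)
            exact Finset.mem_erase.mpr ⟨hxu1, (hmemN x w).mpr hadj⟩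
  -- choose free colors
  have hfree : ∀ S : Finset (Fin 13), S.card ≤ 12 → ∃ k, k ∉ S := by
    intro S hS
    by_contra h
    push_neg at h
    have hle : (Finset.univ : Finset (Fin 13)).card ≤ S.card :=
      Finset.card_le_card (fun k _ => h k)
    rw [Finset.card_fin] at hle
    omega
  obtain ⟨k1, hk1⟩ := hfree (T1.image c') (le_trans Finset.card_image_le hT1card)
  have he1T0 : e1 ∈ T0 := hT0B e1 (Finset.mem_erase.mpr ⟨he01.symm, he1i1⟩)
  have hS0card : (insert k1 ((T0.erase e1).image c')).card ≤ 12 := by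
    refine le_trans (Finset.card_insert_le _ _) ?_
    have h1 : ((T0.erase e1).image c').card ≤ (T0.erase e1).card := Finset.card_image_le
    rw [Finset.card_erase_of_mem he1T0] at h1
    omega
  obtain ⟨k0, hk0⟩ := hfree _ hS0card
  set cF : Sym2 V → Fin 13 := fun e => if e = e0 then k0 else if e = e1 then k1 else c' e
    with hcFdef
  have hcF0 : cF e0 = k0 := if_pos rfl
  have hcF1 : cF e1 = k1 := by
    show (if e1 = e0 then k0 else if e1 = e1 then k1 else c' e1) = k1
    rw [if_neg he01.symm, if_pos rfl]
  have hcFo : ∀ f, f ≠ e0 → f ≠ e1 → cF f = c' f := by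
    intro f h0 h1
    show (if f = e0 then k0 else if f = e1 then k1 else c' f) = c' f
    rw [if_neg h0, if_neg h1]
  have hsymm : ∀ e f : Sym2 V, G.Sees e f → G.Sees f e := by
    intro e f hs
    obtain ⟨u, hu, x, hx, h⟩ := hs
    refine ⟨x, hx, u, hu, ?_⟩
    rcases h with h | h
    · exact Or.inl h.symm
    · exact Or.inr h.symm
  apply hG
  refine ⟨cF, ?_⟩
  intro e he f hf hne hsee
  induction e using Sym2.ind with
  | _ a b =>
    induction f using Sym2.ind with
    | _ a' b' =>
      by_cases h1 : s(a, b) = e0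
      · by_cases h3 : s(a', b') = e0
        · exact absurd (h1.trans h3.symm) hne
        · by_cases h4 : s(a', b') = e1
          · rw [h1, h4, hcF0, hcF1]
            intro hk
            apply hk0
            rw [hk]
            exact Finset.mem_insert_self _ _
          · rw [h1, hcF0, hcFo _ h3 h4]
            have hmem : s(a', b') ∈ T0.erase e1 :=
              Finset.mem_erase.mpr ⟨h4, hcov0 _ hf h3 (by rw [h1] at hsee; exact hsee)⟩
            intro hk
            apply hk0
            rw [hk]
            exact Finset.mem_insert_of_mem (Finset.mem_image_of_mem c' hmem)
      · by_cases h2 : s(a, b) = e1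
        · by_cases h3 : s(a', b') = e0
          · rw [h2, h3, hcF1, hcF0]
            intro hk
            apply hk0
            rw [← hk]
            exact Finset.mem_insert_self _ _
          · by_cases h4 : s(a', b') = e1
            · exact absurd (h2.trans h4.symm) hne
            · rw [h2, hcF1, hcFo _ h3 h4]
              have hmem : s(a', b') ∈ T1 :=
                hcov1 _ hf h3 h4 (by rw [h2] at hsee; exact hsee)
              intro hk
              apply hk1
              rw [hk]
              exact Finset.mem_image_of_mem c' hmem
        · by_cases h3 : s(a', b') = e0
          · rw [h3, hcF0, hcFo _ h1 h2]
            have hmem : s(a, b) ∈ T0.erase e1 :=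
              Finset.mem_erase.mpr ⟨h2, hcov0 _ he h1
                (hsymm _ _ (by rw [h3] at hsee; exact hsee))⟩
            intro hk
            apply hk0
            rw [← hk]
            exact Finset.mem_insert_of_mem (Finset.mem_image_of_mem c' hmem)
          · by_cases h4 : s(a', b') = e1
            · rw [h4, hcF1, hcFo _ h1 h2]
              have hmem : s(a, b) ∈ T1 :=
                hcov1 _ he h1 h2 (hsymm _ _ (by rw [h4] at hsee; exact hsee))
              intro hk
              apply hk1
              rw [← hk]
              exact Finset.mem_image_of_mem c' hmem
            · rw [hcFo _ h1 h2, hcFo _ h3 h4]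
              exact htrans a b a' b' ((hmemE a b).mp he)
                ((hmemE a' b').mp hf) h1 h2 h3 h4 hne hsee
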